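/- Let n ≥ 1 and θ ∈ (0, π), and define H_n(t, θ) = (sin(nθ)·sin θ)/(2n) · [cos(n(t − π/(2n)))/(cos(t − π/(2n)) − cos θ) + cos(n(t + π/(2n)))/(cos(t + π/(2n)) − cos θ)]. Then ∫₀^π H_n(t, θ) dt = (π/n)·sin²(nθ). -/

import Mathlib

open Real MeasureTheory Set Filter

/-- The kernel `H_n(t,θ)`. -/
noncomputable def Hker (n : ℕ) (t θ : ℝ) : ℝ :=
  (Real.sin (n * θ) * Real.sin θ) / (2 * n) *
    (Real.cos (n * (t - π / (2 * n))) / (Real.cos (t - π / (2 * n)) - Real.cos θ) +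
     Real.cos (n * (t + π / (2 * n))) / (Real.cos (t + π / (2 * n)) - Real.cos θ))


noncomputable def WW (c : ℝ) : ℕ → ℝ → ℝ
  | 0, _ => 0
  | 1, _ => 1
  | (m+2), u => 2 * Real.cos (((m:ℝ)+1)*u) + 2*c* WW c (m+1) u - WW c m u

lemma WW_continuous (c : ℝ) (m : ℕ) : Continuous (WW c m) := by
  induction m using Nat.twoStepInduction with
  | zero => simpa [WW] using continuous_const
  | one => simpa [WW] using continuous_const
  | more m h1 h2 =>
    show Continuous fun u => 2 * Real.cos (((m:ℝ)+1)*u) + 2*c* WW c (m+1) u - WW c m u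
    fun_prop

lemma WW_spec (θ : ℝ) (m : ℕ) (u : ℝ) :
    (Real.cos u - Real.cos θ) * WW (Real.cos θ) m u = Real.cos (m*u) - Real.cos (m*θ) := by
  induction m using Nat.twoStepInduction with
  | zero => simp [WW]
  | one => simp [WW]
  | more m h1 h2 =>
    have key : ∀ x : ℝ, Real.cos (((m:ℝ)+2)*x)
        = 2 * Real.cos x * Real.cos (((m:ℝ)+1)*x) - Real.cos ((m:ℝ)*x) := by
      intro x
      have e1 : ((m:ℝ)+2)*x = ((m:ℝ)+1)*x + x := by ring
      have e2 : (m:ℝ)*x = ((m:ℝ)+1)*x - x := by ring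
      rw [e1, e2, Real.cos_add, Real.cos_sub]; ring
    show (Real.cos u - Real.cos θ) * (2 * Real.cos (((m:ℝ)+1)*u)
        + 2*Real.cos θ* WW (Real.cos θ) (m+1) u - WW (Real.cos θ) m u) = _
    push_cast at h1 h2 ⊢
    rw [key u, key θ]
    linear_combination 2*Real.cos θ * h2 - h1

lemma WW_even (c : ℝ) (m : ℕ) (u : ℝ) : WW c m (-u) = WW c m u := by
  induction m using Nat.twoStepInduction with
  | zero => simp [WW]
  | one => simp [WW]
  | more m h1 h2 =>
    show 2 * Real.cos (((m:ℝ)+1)*(-u)) + 2*c* WW c (m+1) (-u) - WW c m (-u) = _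
    rw [h1, h2, show ((m:ℝ)+1)*(-u) = -(((m:ℝ)+1)*u) by ring, Real.cos_neg]
    rfl

lemma WW_symm (c : ℝ) (m : ℕ) (u : ℝ) : WW c m (π+u) = WW c m (π-u) := by
  induction m using Nat.twoStepInduction with
  | zero => simp [WW]
  | one => simp [WW]
  | more m h1 h2 =>
    show 2 * Real.cos (((m:ℝ)+1)*(π+u)) + 2*c* WW c (m+1) (π+u) - WW c m (π+u)
        = 2 * Real.cos (((m:ℝ)+1)*(π-u)) + 2*c* WW c (m+1) (π-u) - WW c m (π-u)
    rw [h1, h2]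
    congr 2
    have e1 : ((m:ℝ)+1)*(π+u) = ((m:ℝ)+1)*u + ((m:ℕ)+1:ℤ)*π := by push_cast; ring
    have e2 : ((m:ℝ)+1)*(π-u) = -(((m:ℝ)+1)*u) + ((m:ℕ)+1:ℤ)*π := by push_cast; ring
    rw [e1, e2, Real.cos_add, Real.cos_add, Real.cos_neg, Real.sin_neg,
      Real.sin_int_mul_pi]
    ring

lemma integral_cos_k (k : ℝ) (hk : k ≠ 0) (b : ℝ) :
    ∫ u in (0:ℝ)..b, Real.cos (k*u) = Real.sin (k*b)/k := by
  have : ∀ u ∈ Set.uIcc (0:ℝ) b, HasDerivAt (fun x => Real.sin (k*x)/k) (Real.cos (k*u)) u := by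
    intro u _
    have h := ((Real.hasDerivAt_sin (k*u)).comp u (by simpa using (hasDerivAt_id u).const_mul k))
    simpa [mul_comm, mul_div_assoc, mul_div_cancel_left₀ _ hk] using h.div_const k
  rw [intervalIntegral.integral_eq_sub_of_hasDerivAt this
    (by apply Continuous.intervalIntegrable; fun_prop)]
  simp

lemma WW_integral (θ : ℝ) (hs : Real.sin θ ≠ 0) (m : ℕ) :
    ∫ u in (0:ℝ)..π, WW (Real.cos θ) m u = π * Real.sin (m*θ) / Real.sin θ := by
  induction m using Nat.twoStepInduction with
  | zero => simp [WW]
  | one =>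
    have : (WW (Real.cos θ) 1) = fun _ : ℝ => (1:ℝ) := rfl
    rw [this, intervalIntegral.integral_const]
    rw [Nat.cast_one, one_mul]
    field_simp
    simp
  | more m h1 h2 =>
    have key : Real.sin (((m:ℝ)+2)*θ) = 2*Real.cos θ*Real.sin (((m:ℝ)+1)*θ) - Real.sin ((m:ℝ)*θ) := by
      have e1 : ((m:ℝ)+2)*θ = ((m:ℝ)+1)*θ + θ := by ring
      have e2 : (m:ℝ)*θ = ((m:ℝ)+1)*θ - θ := by ring
      rw [e1, e2, Real.sin_add, Real.sin_sub]; ring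
    have hint : ∀ j : ℕ, IntervalIntegrable (WW (Real.cos θ) j) volume 0 π :=
      fun j => (WW_continuous _ j).intervalIntegrable _ _
    have e0 : ∫ u in (0:ℝ)..π, Real.cos (((m:ℝ)+1)*u) = 0 := by
      rw [integral_cos_k _ (by positivity)]
      rw [show ((m:ℝ)+1)*π = (((m:ℕ)+1:ℤ):ℝ)*π by push_cast; ring, Real.sin_int_mul_pi]
      simp
    have : (∫ u in (0:ℝ)..π, WW (Real.cos θ) (m+2) u)
        = ∫ u in (0:ℝ)..π, (2 * Real.cos (((m:ℝ)+1)*u) + 2*Real.cos θ* WW (Real.cos θ) (m+1) u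
            - WW (Real.cos θ) m u) := rfl
    have hc : IntervalIntegrable (fun u => 2 * Real.cos (((m:ℝ)+1)*u)) volume 0 π :=
      (by fun_prop : Continuous fun u : ℝ => 2 * Real.cos (((m:ℝ)+1)*u)).intervalIntegrable _ _
    rw [this, intervalIntegral.integral_sub (hc.add ((hint (m+1)).const_mul _)) (hint m),
      intervalIntegral.integral_add hc ((hint (m+1)).const_mul _)]
    rw [intervalIntegral.integral_const_mul, intervalIntegral.integral_const_mul, e0, h1, h2]
    push_cast
    rw [key]
    field_simp
    ring


noncomputable def AA (θ u : ℝ) : ℝ :=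
  (Real.log (Real.sin ((u+θ)/2)) - Real.log (Real.sin ((u-θ)/2))) / Real.sin θ

lemma AA_odd (θ u : ℝ) : AA θ (-u) = -(AA θ u) := by
  unfold AA
  rw [show (-u+θ)/2 = -((u-θ)/2) by ring, show (-u-θ)/2 = -((u+θ)/2) by ring,
    Real.sin_neg, Real.sin_neg, Real.log_neg_eq_log, Real.log_neg_eq_log]
  ring

lemma AA_periodic (θ u : ℝ) : AA θ (u + 2*π) = AA θ u := by
  unfold AA
  rw [show (u+2*π+θ)/2 = (u+θ)/2 + π by ring, show (u+2*π-θ)/2 = (u-θ)/2 + π by ring,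
    Real.sin_add_pi, Real.sin_add_pi, Real.log_neg_eq_log, Real.log_neg_eq_log]

lemma AA_pi (θ u : ℝ) : AA θ (π - u) = -(AA θ (π + u)) := by
  have h1 : AA θ (π - u) = -(AA θ (u - π)) := by
    rw [show π - u = -(u - π) by ring, AA_odd]
  have h2 : AA θ (u - π + 2*π) = AA θ (u - π) := AA_periodic θ (u - π)
  rw [h1, ← h2, show u - π + 2*π = π + u by ring]

lemma AA_hasDerivAt (θ u : ℝ) (hs : Real.sin θ ≠ 0) (h : Real.cos u ≠ Real.cos θ) :
    HasDerivAt (AA θ) ((Real.cos u - Real.cos θ)⁻¹) u := by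
  set x := (u+θ)/2 with hx
  set y := (u-θ)/2 with hy
  have hcc : Real.cos u - Real.cos θ = -2 * Real.sin x * Real.sin y := Real.cos_sub_cos u θ
  have hne : Real.cos u - Real.cos θ ≠ 0 := sub_ne_zero.mpr h
  have hsx : Real.sin x ≠ 0 := by intro h0; rw [h0] at hcc; simp at hcc; exact hne (by rw [hcc])
  have hsy : Real.sin y ≠ 0 := by intro h0; rw [h0] at hcc; simp at hcc; exact hne (by rw [hcc])
  have dx : HasDerivAt (fun v : ℝ => (v+θ)/2) (1/2) u := by
    simpa using ((hasDerivAt_id u).add_const θ).div_const 2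
  have dy : HasDerivAt (fun v : ℝ => (v-θ)/2) (1/2) u := by
    simpa using ((hasDerivAt_id u).sub_const θ).div_const 2
  have dsx : HasDerivAt (fun v : ℝ => Real.sin ((v+θ)/2)) (Real.cos x * (1/2)) u :=
    by exact (Real.hasDerivAt_sin x).comp u dx
  have dsy : HasDerivAt (fun v : ℝ => Real.sin ((v-θ)/2)) (Real.cos y * (1/2)) u :=
    by exact (Real.hasDerivAt_sin y).comp u dy
  have dlx : HasDerivAt (fun v : ℝ => Real.log (Real.sin ((v+θ)/2)))
      (Real.cos x * (1/2) / Real.sin x) u := dsx.log hsx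
  have dly : HasDerivAt (fun v : ℝ => Real.log (Real.sin ((v-θ)/2)))
      (Real.cos y * (1/2) / Real.sin y) u := dsy.log hsy
  have d := (dlx.sub dly).div_const (Real.sin θ)
  have hθs : Real.sin θ = Real.sin x * Real.cos y - Real.cos x * Real.sin y := by
    rw [show θ = x - y by rw [hx, hy]; ring] ; exact Real.sin_sub x y
  have e1 : Real.cos x * (1/2)/ Real.sin x - Real.cos y * (1/2)/ Real.sin y
      = - Real.sin θ / (2 * Real.sin x * Real.sin y) := by
    rw [hθs]; field_simp; ring
  have e2 : (Real.cos x * (1/2)/ Real.sin x - Real.cos y * (1/2)/ Real.sin y) / Real.sin θ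
      = (Real.cos u - Real.cos θ)⁻¹ := by
    rw [e1, hcc]; field_simp
  exact e2 ▸ d

lemma log_sin_diff (q : ℝ) :
    Tendsto (fun ε : ℝ => Real.log (Real.sin ((q+ε)/2)) - Real.log (Real.sin ((q-ε)/2)))
      (nhdsWithin 0 (Set.Ioi 0)) (nhds 0) := by
  by_cases h : Real.sin (q/2) = 0
  · obtain ⟨k, hk⟩ := Real.sin_eq_zero_iff.mp h
    have key : ∀ ε : ℝ, Real.log (Real.sin ((q+ε)/2)) - Real.log (Real.sin ((q-ε)/2)) = 0 := by
      intro ε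
      have e1 : (q+ε)/2 = ε/2 + (k:ℝ)*π := by rw [show (q+ε)/2 = ε/2 + q/2 by ring, ← hk]
      have e2 : (q-ε)/2 = (k:ℝ)*π - ε/2 := by rw [show (q-ε)/2 = q/2 - ε/2 by ring, ← hk]
      have s1 : Real.sin ((q+ε)/2) = Real.sin (ε/2) * Real.cos ((k:ℝ)*π) := by
        rw [e1, Real.sin_add, Real.sin_int_mul_pi]; ring
      have s2 : Real.sin ((q-ε)/2) = -(Real.sin (ε/2) * Real.cos ((k:ℝ)*π)) := by
        rw [e2, Real.sin_sub, Real.sin_int_mul_pi]; ring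
      rw [s1, s2, Real.log_neg_eq_log, sub_self]
    simpa [key] using tendsto_const_nhds (α := ℝ) (f := nhdsWithin (0:ℝ) (Set.Ioi 0)) (a := (0:ℝ))
  · have c1 : ContinuousAt (fun ε : ℝ => Real.log (Real.sin ((q+ε)/2))) 0 := by
      apply ContinuousAt.comp (Real.continuousAt_log (by simpa using h))
      fun_prop
    have c2 : ContinuousAt (fun ε : ℝ => Real.log (Real.sin ((q-ε)/2))) 0 := by
      apply ContinuousAt.comp (Real.continuousAt_log (by simpa using h))
      fun_prop
    have := (c1.sub c2).tendsto
    simp only [Pi.sub_apply, zero_add, sub_zero, add_zero, zero_sub, sub_self] at this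
    exact this.mono_left nhdsWithin_le_nhds

lemma AA_diff_tendsto (θ p : ℝ) :
    Tendsto (fun ε : ℝ => AA θ (p+ε) - AA θ (p-ε)) (nhdsWithin 0 (Set.Ioi 0)) (nhds 0) := by
  have := ((log_sin_diff (p+θ)).sub (log_sin_diff (p-θ))).div_const (Real.sin θ)
  simp only [sub_zero, zero_div] at this
  refine this.congr (fun ε => ?_)
  unfold AA
  have e1 : (p+θ+ε)/2 = (p+ε+θ)/2 := by ring
  have e2 : (p+θ-ε)/2 = (p-ε+θ)/2 := by ring
  have e3 : (p-θ+ε)/2 = (p+ε-θ)/2 := by ring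
  have e4 : (p-θ-ε)/2 = (p-ε-θ)/2 := by ring
  rw [e1, e2, e3, e4]
  ring

noncomputable def VV (c : ℝ) (m : ℕ) (u : ℝ) : ℝ := ∫ x in (0:ℝ)..u, WW c m x

lemma VV_hasDerivAt (c : ℝ) (m : ℕ) (u : ℝ) : HasDerivAt (VV c m) (WW c m u) u :=
  intervalIntegral.integral_hasDerivAt_right ((WW_continuous c m).intervalIntegrable _ _)
    ((WW_continuous c m).stronglyMeasurable.stronglyMeasurableAtFilter)
    (WW_continuous c m).continuousAt

lemma VV_continuous (c : ℝ) (m : ℕ) : Continuous (VV c m) :=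
  continuous_iff_continuousAt.2 fun u => (VV_hasDerivAt c m u).continuousAt

lemma VV_sum (c : ℝ) (m : ℕ) (a : ℝ) :
    VV c m (π - a) + VV c m (π + a) - VV c m (-a) - VV c m a
      = 2 * ∫ u in (0:ℝ)..π, WW c m u := by
  have hii : ∀ x y : ℝ, IntervalIntegrable (WW c m) volume x y :=
    fun x y => (WW_continuous c m).intervalIntegrable x y
  have h1 : VV c m (-a) + ∫ x in (-a)..(π - a), WW c m x = VV c m (π - a) :=
    intervalIntegral.integral_add_adjacent_intervals (hii _ _) (hii _ _)
  have h2 : VV c m a + ∫ x in a..(π + a), WW c m x = VV c m (π + a) :=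
    intervalIntegral.integral_add_adjacent_intervals (hii _ _) (hii _ _)
  have hs1 : (∫ x in (-a)..(0:ℝ), WW c m x) + ∫ x in (0:ℝ)..(π-a), WW c m x
      = ∫ x in (-a)..(π - a), WW c m x :=
    intervalIntegral.integral_add_adjacent_intervals (hii _ _) (hii _ _)
  have hs2 : (∫ x in a..π, WW c m x) + ∫ x in π..(π+a), WW c m x
      = ∫ x in a..(π + a), WW c m x :=
    intervalIntegral.integral_add_adjacent_intervals (hii _ _) (hii _ _)
  have e1 : ∫ x in (-a)..(0:ℝ), WW c m x = ∫ x in (0:ℝ)..a, WW c m x := by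
    have h := intervalIntegral.integral_comp_neg (a := (0:ℝ)) (b := a) (f := WW c m)
    simp only [neg_zero] at h
    rw [← h]
    exact intervalIntegral.integral_congr fun x _ => WW_even c m x
  have e2 : ∫ x in π..(π+a), WW c m x = ∫ x in (π - a)..π, WW c m x := by
    have h1' := intervalIntegral.integral_comp_add_left (a := (0:ℝ)) (b := a) (f := WW c m) π
    have h2' := intervalIntegral.integral_comp_sub_left (a := (0:ℝ)) (b := a) (f := WW c m) π
    simp only [add_zero, sub_zero] at h1' h2'
    rw [← h1', ← h2']
    exact intervalIntegral.integral_congr fun x _ => WW_symm c m x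
  have t1 : (∫ x in (0:ℝ)..a, WW c m x) + ∫ x in a..π, WW c m x = ∫ x in (0:ℝ)..π, WW c m x :=
    intervalIntegral.integral_add_adjacent_intervals (hii _ _) (hii _ _)
  have t2 : (∫ x in (0:ℝ)..(π-a), WW c m x) + ∫ x in (π-a)..π, WW c m x
      = ∫ x in (0:ℝ)..π, WW c m x :=
    intervalIntegral.integral_add_adjacent_intervals (hii _ _) (hii _ _)
  linarith

lemma WW_add_inv (θ : ℝ) (m : ℕ) (u : ℝ) (h : Real.cos u ≠ Real.cos θ) :
    WW (Real.cos θ) m u + Real.cos (m*θ) * (Real.cos u - Real.cos θ)⁻¹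
      = Real.cos (m*u) / (Real.cos u - Real.cos θ) := by
  have hne : Real.cos u - Real.cos θ ≠ 0 := sub_ne_zero.mpr h
  field_simp
  linear_combination WW_spec θ m u

noncomputable def prim (θ a : ℝ) (n : ℕ) (t : ℝ) : ℝ :=
  VV (Real.cos θ) n (t - a) + VV (Real.cos θ) n (t + a)
    + Real.cos (n*θ) * (AA θ (t - a) + AA θ (t + a))

lemma prim_hasDerivAt (θ a : ℝ) (n : ℕ) (t : ℝ) (hs : Real.sin θ ≠ 0)
    (h1 : Real.cos (t - a) ≠ Real.cos θ) (h2 : Real.cos (t + a) ≠ Real.cos θ) :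
    HasDerivAt (prim θ a n)
      (Real.cos (n*(t - a)) / (Real.cos (t - a) - Real.cos θ)
        + Real.cos (n*(t + a)) / (Real.cos (t + a) - Real.cos θ)) t := by
  have dm : HasDerivAt (fun v : ℝ => v - a) 1 t := (hasDerivAt_id t).sub_const a
  have dp : HasDerivAt (fun v : ℝ => v + a) 1 t := (hasDerivAt_id t).add_const a
  have dV1 : HasDerivAt (fun v : ℝ => VV (Real.cos θ) n (v - a)) (WW (Real.cos θ) n (t-a)) t := by
    simpa [Function.comp_def] using (VV_hasDerivAt (Real.cos θ) n (t-a)).comp t dm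
  have dV2 : HasDerivAt (fun v : ℝ => VV (Real.cos θ) n (v + a)) (WW (Real.cos θ) n (t+a)) t := by
    simpa [Function.comp_def] using (VV_hasDerivAt (Real.cos θ) n (t+a)).comp t dp
  have dA1 : HasDerivAt (fun v : ℝ => AA θ (v - a)) ((Real.cos (t-a) - Real.cos θ)⁻¹) t := by
    simpa [Function.comp_def] using (AA_hasDerivAt θ (t-a) hs h1).comp t dm
  have dA2 : HasDerivAt (fun v : ℝ => AA θ (v + a)) ((Real.cos (t+a) - Real.cos θ)⁻¹) t := by
    simpa [Function.comp_def] using (AA_hasDerivAt θ (t+a) hs h2).comp t dp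
  have d := (dV1.add dV2).add (((dA1.add dA2)).const_mul (Real.cos (n*θ)))
  have e : WW (Real.cos θ) n (t-a) + WW (Real.cos θ) n (t+a)
      + Real.cos (n*θ) * ((Real.cos (t-a) - Real.cos θ)⁻¹ + (Real.cos (t+a) - Real.cos θ)⁻¹)
      = Real.cos (n*(t - a)) / (Real.cos (t - a) - Real.cos θ)
        + Real.cos (n*(t + a)) / (Real.cos (t + a) - Real.cos θ) := by
    rw [← WW_add_inv θ n (t-a) h1, ← WW_add_inv θ n (t+a) h2]
    ring
  exact e ▸ d

lemma prim_diff_tendsto (θ a : ℝ) (n : ℕ) (p : ℝ) :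
    Tendsto (fun ε : ℝ => prim θ a n (p+ε) - prim θ a n (p-ε))
      (nhdsWithin 0 (Set.Ioi 0)) (nhds 0) := by
  have hV : ∀ b : ℝ, Tendsto (fun ε : ℝ => VV (Real.cos θ) n (p+ε-b) - VV (Real.cos θ) n (p-ε-b))
      (nhdsWithin 0 (Set.Ioi 0)) (nhds 0) := by
    intro b
    have c1 : Continuous (fun ε : ℝ => VV (Real.cos θ) n (p+ε-b) - VV (Real.cos θ) n (p-ε-b)) := by
      apply Continuous.sub <;> exact (VV_continuous _ n).comp (by fun_prop)
    have := c1.continuousAt (x := 0)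
    simp only [ContinuousAt, add_zero, sub_zero, zero_sub, zero_add] at this
    simpa using this.mono_left nhdsWithin_le_nhds
  have hA : ∀ b : ℝ, Tendsto (fun ε : ℝ => AA θ (p+ε-b) - AA θ (p-ε-b))
      (nhdsWithin 0 (Set.Ioi 0)) (nhds 0) := by
    intro b
    have := AA_diff_tendsto θ (p - b)
    refine this.congr fun ε => ?_
    rw [show p - b + ε = p + ε - b by ring, show p - b - ε = p - ε - b by ring]
  have h := ((hV a).add (hV (-a))).add (((hA a).add (hA (-a))).const_mul (Real.cos (n*θ)))
  simp only [add_zero, mul_zero, sub_neg_eq_add] at h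
  refine h.congr fun ε => ?_
  unfold prim
  ring_nf


lemma classify (θ a s p1 p2 : ℝ) (hθ1 : 0 < θ) (hθ2 : θ < π) (ha : 0 < a) (ha2 : a ≤ π/2)
    (hp1 : p1 = |θ - a|) (hp2 : p2 = min (θ+a) (2*π-(θ+a)))
    (hcond : Real.cos (s - a) = Real.cos θ ∨ Real.cos (s + a) = Real.cos θ) :
    s = p1 ∨ s = -p1 ∨ s = p2 ∨ s = 2*π - p2 ∨ s ≤ -a ∨ π + a ≤ s := by
  have hπ := Real.pi_pos
  have habs : θ - a = p1 ∨ θ - a = -p1 := by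
    rcases abs_cases (θ - a) with ⟨h, _⟩ | ⟨h, _⟩
    · left; rw [hp1, h]
    · right; rw [hp1, h]; ring
  have hmin : θ + a = p2 ∨ θ + a = 2*π - p2 := by
    rcases min_cases (θ+a) (2*π-(θ+a)) with ⟨h, _⟩ | ⟨h, _⟩
    · left; rw [hp2, h]
    · right; rw [hp2, h]; ring
  rcases hcond with hc | hc <;> rw [Real.cos_eq_cos_iff] at hc <;> obtain ⟨k, hk | hk⟩ := hc
  · -- θ = 2kπ + (s - a), s = θ + a - 2kπ
    have hs : s = θ + a - 2*(k:ℝ)*π := by linarith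
    rcases lt_trichotomy k 0 with h | h | h
    · have : (k:ℝ) ≤ -1 := by exact_mod_cast Int.le_sub_one_of_lt h
      right; right; right; right; right; nlinarith
    · subst h; simp only [Int.cast_zero] at hs
      rcases hmin with h | h
      · right; right; left; linarith
      · right; right; right; left; linarith
    · have : (1:ℝ) ≤ (k:ℝ) := by exact_mod_cast h
      right; right; right; right; left; nlinarith
  · -- θ = 2kπ - (s - a), s = 2kπ - θ + a
    have hs : s = 2*(k:ℝ)*π - θ + a := by linarith
    rcases lt_trichotomy k 0 with h | h | h
    · have : (k:ℝ) ≤ -1 := by exact_mod_cast Int.le_sub_one_of_lt h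
      right; right; right; right; left; nlinarith
    · subst h; simp only [Int.cast_zero] at hs
      rcases habs with h | h
      · right; left; linarith
      · left; linarith
    · have : (1:ℝ) ≤ (k:ℝ) := by exact_mod_cast h
      right; right; right; right; right; nlinarith
  · -- θ = 2kπ + (s + a), s = θ - a - 2kπ
    have hs : s = θ - a - 2*(k:ℝ)*π := by linarith
    rcases lt_trichotomy k 0 with h | h | h
    · have : (k:ℝ) ≤ -1 := by exact_mod_cast Int.le_sub_one_of_lt h
      right; right; right; right; right; nlinarith
    · subst h; simp only [Int.cast_zero] at hs
      rcases habs with h | h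
      · left; linarith
      · right; left; linarith
    · have : (1:ℝ) ≤ (k:ℝ) := by exact_mod_cast h
      right; right; right; right; left; nlinarith
  · -- θ = 2kπ - (s + a), s = 2kπ - θ - a
    have hs : s = 2*(k:ℝ)*π - θ - a := by linarith
    rcases lt_trichotomy k 1 with h | h | h
    · have : (k:ℝ) ≤ 0 := by exact_mod_cast Int.le_sub_one_of_lt h
      right; right; right; right; left; nlinarith
    · subst h; simp only [Int.cast_one] at hs
      rcases hmin with h | h
      · right; right; right; left; linarith
      · right; right; left; linarith
    · have : (2:ℝ) ≤ (k:ℝ) := by exact_mod_cast h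
      right; right; right; right; right; nlinarith

lemma Sset_eq (θ a ε p1 p2 : ℝ) (hθ1 : 0 < θ) (hθ2 : θ < π) (ha : 0 < a) (ha2 : a ≤ π/2)
    (hp1 : p1 = |θ - a|) (hp2 : p2 = min (θ+a) (2*π-(θ+a)))
    (hε : 0 < ε) (hεa : ε ≤ a) (hgap : 2*ε ≤ p2 - p1) :
    {t ∈ Set.Icc (0:ℝ) π | ∀ s : ℝ,
        (Real.cos (s - a) = Real.cos θ ∨ Real.cos (s + a) = Real.cos θ) → ε ≤ |t - s|}
      = (Set.Icc 0 (p1-ε) ∪ Set.Icc (p1+ε) (p2-ε)) ∪ Set.Icc (p2+ε) π := by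
  have hπ := Real.pi_pos
  have hp1_nonneg : 0 ≤ p1 := hp1 ▸ abs_nonneg _
  have hp1_lt_pi : p1 < π := hp1 ▸ abs_lt.mpr ⟨by linarith, by linarith⟩
  have hp2_le_pi : p2 ≤ π := by
    have h1 : p2 ≤ θ + a := hp2 ▸ min_le_left _ _
    have h2 : p2 ≤ 2*π-(θ+a) := hp2 ▸ min_le_right _ _
    linarith
  have hp1p2 : p1 + 2*ε ≤ p2 := by linarith
  have hcond1 : Real.cos (p1 - a) = Real.cos θ ∨ Real.cos (p1 + a) = Real.cos θ := by
    rcases le_total a θ with h | h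
    · right; rw [hp1, abs_of_nonneg (by linarith), sub_add_cancel]
    · left; rw [hp1, abs_of_nonpos (by linarith), show -(θ-a) - a = -θ by ring, Real.cos_neg]
  have hcond2 : Real.cos (p2 - a) = Real.cos θ ∨ Real.cos (p2 + a) = Real.cos θ := by
    rcases le_total (θ+a) (2*π-(θ+a)) with h | h
    · left; rw [hp2, min_eq_left h, add_sub_cancel_right]
    · right; rw [hp2, min_eq_right h, show 2*π-(θ+a)+a = 2*π - θ by ring]
      rw [Real.cos_sub, Real.cos_two_pi, Real.sin_two_pi]; ring
  ext t
  simp only [Set.mem_setOf_eq, Set.mem_Icc, Set.mem_union]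
  constructor
  · rintro ⟨⟨ht0, htπ⟩, hall⟩
    have h1 := hall p1 hcond1
    have h2 := hall p2 hcond2
    rcases abs_cases (t - p1) with ⟨e1, _⟩ | ⟨e1, _⟩ <;>
      rcases abs_cases (t - p2) with ⟨e2, _⟩ | ⟨e2, _⟩ <;> rw [e1] at h1 <;> rw [e2] at h2
    · right; constructor <;> linarith
    · left; right; constructor <;> linarith
    · left; right; constructor <;> linarith
    · left; left; constructor <;> linarith
  · intro ht
    have hmem : 0 ≤ t ∧ t ≤ π := by
      rcases ht with (⟨h1, h2⟩ | ⟨h1, h2⟩) | ⟨h1, h2⟩ <;> constructor <;> linarith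
    obtain ⟨ht0, htπ⟩ := hmem
    have htp1 : ε ≤ |t - p1| ∧ ε ≤ |t - p2| := by
      constructor <;> rw [le_abs] <;>
        [rcases ht with (⟨h1, h2⟩ | ⟨h1, h2⟩) | ⟨h1, h2⟩;
         rcases ht with (⟨h1, h2⟩ | ⟨h1, h2⟩) | ⟨h1, h2⟩]
      · right; linarith
      · left; linarith
      · left; linarith
      · right; linarith
      · right; linarith
      · left; linarith
    refine ⟨⟨ht0, htπ⟩, fun s hscond => ?_⟩
    rcases classify θ a s p1 p2 hθ1 hθ2 ha ha2 hp1 hp2 hscond with h | h | h | h | h | h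
    · subst h; exact htp1.1
    · subst h
      rcases abs_cases (t - p1) with ⟨e1, _⟩ | ⟨e1, _⟩ <;>
        [skip; skip] <;> rw [le_abs] <;> left
      · have := htp1.1; rw [e1] at this; linarith
      · have := htp1.1; rw [e1] at this; linarith
    · subst h; exact htp1.2
    · subst h
      rw [le_abs]; right
      rcases abs_cases (t - p2) with ⟨e2, _⟩ | ⟨e2, _⟩
      · have := htp1.2; rw [e2] at this; linarith
      · have := htp1.2; rw [e2] at this; linarith
    · rw [le_abs]; left; linarith
    · rw [le_abs]; right; linarith

theorem integral_Hker (n : ℕ) (hn : 1 ≤ n) (θ : ℝ) (hθ : θ ∈ Set.Ioo 0 π) :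
    Tendsto (fun ε : ℝ =>
        ∫ t in {t ∈ Set.Icc (0:ℝ) π | ∀ s : ℝ,
          (Real.cos (s - π / (2 * n)) = Real.cos θ ∨
           Real.cos (s + π / (2 * n)) = Real.cos θ) → ε ≤ |t - s|},
          Hker n t θ)
      (nhdsWithin 0 (Set.Ioi 0))
      (nhds (π / n * (Real.sin (n * θ)) ^ 2)) := by
  obtain ⟨hθ1, hθ2⟩ := hθ
  have hπ := Real.pi_pos
  have hn' : (1:ℝ) ≤ (n:ℝ) := by exact_mod_cast hn
  have hs : Real.sin θ ≠ 0 := ne_of_gt (Real.sin_pos_of_pos_of_lt_pi hθ1 hθ2)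
  set a := π / (2 * (n:ℝ)) with ha_def
  have ha : 0 < a := by rw [ha_def]; positivity
  have ha2 : a ≤ π / 2 := by
    rw [ha_def, div_le_div_iff₀ (by positivity) two_pos]
    nlinarith
  set p1 := |θ - a| with hp1_def
  set p2 := min (θ+a) (2*π-(θ+a)) with hp2_def
  have hp1_nonneg : 0 ≤ p1 := abs_nonneg _
  have hp1_lt_pi : p1 < π := abs_lt.mpr ⟨by linarith, by linarith⟩
  have hp2_le_pi : p2 ≤ π := by
    have h1 : p2 ≤ θ + a := min_le_left _ _
    have h2 : p2 ≤ 2*π-(θ+a) := min_le_right _ _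
    linarith
  have hp1p2 : p1 < p2 := by
    rcases abs_cases (θ - a) with ⟨h, _⟩ | ⟨h, _⟩ <;>
      · rw [hp1_def, h]
        exact lt_min (by linarith) (by linarith)
  set ε0 := min a ((p2 - p1)/2) with hε0_def
  have hε0 : 0 < ε0 := lt_min ha (by linarith)
  set C := Real.sin ((n:ℝ) * θ) * Real.sin θ / (2 * (n:ℝ)) with hC_def
  -- goodness of the three regions
  have hgood : ∀ t : ℝ, t ≠ p1 → t ≠ -p1 → t ≠ p2 → t ≠ 2*π - p2 → -a < t → t < π + a →
      Real.cos (t - a) ≠ Real.cos θ ∧ Real.cos (t + a) ≠ Real.cos θ := by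
    intro t h1 h2 h3 h4 h5 h6
    constructor <;> intro hcc <;>
      [rcases classify θ a t p1 p2 hθ1 hθ2 ha ha2 hp1_def hp2_def (Or.inl hcc) with h|h|h|h|h|h;
       rcases classify θ a t p1 p2 hθ1 hθ2 ha ha2 hp1_def hp2_def (Or.inr hcc) with h|h|h|h|h|h] <;>
      first | exact h1 h | exact h2 h | exact h3 h | exact h4 h | linarith
  have hg1 : ∀ ε : ℝ, 0 < ε → ∀ t ∈ Set.Icc (0:ℝ) (p1-ε),
      Real.cos (t - a) ≠ Real.cos θ ∧ Real.cos (t + a) ≠ Real.cos θ := by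
    intro ε hε t ⟨h1, h2⟩
    exact hgood t (ne_of_lt (by linarith)) (ne_of_gt (by linarith))
      (ne_of_lt (by linarith)) (ne_of_lt (by linarith)) (by linarith) (by linarith)
  have hg2 : ∀ ε : ℝ, 0 < ε → ∀ t ∈ Set.Icc (p1+ε) (p2-ε),
      Real.cos (t - a) ≠ Real.cos θ ∧ Real.cos (t + a) ≠ Real.cos θ := by
    intro ε hε t ⟨h1, h2⟩
    exact hgood t (ne_of_gt (by linarith)) (ne_of_gt (by linarith))
      (ne_of_lt (by linarith)) (ne_of_lt (by linarith)) (by linarith) (by linarith)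
  have hg3 : ∀ ε : ℝ, 0 < ε → ∀ t ∈ Set.Icc (p2+ε) π,
      Real.cos (t - a) ≠ Real.cos θ ∧ Real.cos (t + a) ≠ Real.cos θ := by
    intro ε hε t ⟨h1, h2⟩
    exact hgood t (ne_of_gt (by linarith)) (ne_of_gt (by linarith))
      (ne_of_gt (by linarith)) (ne_of_lt (by linarith)) (by linarith) (by linarith)
  -- continuity on good intervals
  have hcont : ∀ x y : ℝ, (∀ t ∈ Set.Icc x y, Real.cos (t - a) ≠ Real.cos θ ∧ Real.cos (t + a) ≠ Real.cos θ) →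
      ContinuousOn (fun t => Hker n t θ) (Set.Icc x y) := by
    intro x y hg
    show ContinuousOn (fun t => C * (Real.cos ((n:ℝ)*(t - a)) / (Real.cos (t - a) - Real.cos θ)
        + Real.cos ((n:ℝ)*(t + a)) / (Real.cos (t + a) - Real.cos θ))) (Set.Icc x y)
    apply ContinuousOn.mul continuousOn_const
    apply ContinuousOn.add
    · exact ContinuousOn.div (by fun_prop) (by fun_prop)
        (fun t ht => sub_ne_zero.mpr (hg t ht).1)
    · exact ContinuousOn.div (by fun_prop) (by fun_prop)
        (fun t ht => sub_ne_zero.mpr (hg t ht).2)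
  -- FTC on good intervals
  have hFTC : ∀ x y : ℝ, x ≤ y →
      (∀ t ∈ Set.Icc x y, Real.cos (t - a) ≠ Real.cos θ ∧ Real.cos (t + a) ≠ Real.cos θ) →
      ∫ t in Set.Icc x y, Hker n t θ = C * prim θ a n y - C * prim θ a n x := by
    intro x y hxy hg
    rw [MeasureTheory.integral_Icc_eq_integral_Ioc, ← intervalIntegral.integral_of_le hxy]
    have hderiv : ∀ t ∈ Set.uIcc x y, HasDerivAt (fun t => C * prim θ a n t) (Hker n t θ) t := by
      intro t ht
      rw [Set.uIcc_of_le hxy] at ht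
      obtain ⟨h1, h2⟩ := hg t ht
      have hd := (prim_hasDerivAt θ a n t hs h1 h2).const_mul C
      convert hd using 1
      all_goals rfl
    have hint : IntervalIntegrable (fun t => Hker n t θ) volume x y := by
      apply ContinuousOn.intervalIntegrable
      rw [Set.uIcc_of_le hxy]
      exact hcont x y hg
    rw [intervalIntegral.integral_eq_sub_of_hasDerivAt hderiv hint]
  -- limit of the middle-interval endpoint contributions at p1
  have hD1 : Tendsto (fun ε : ℝ => C * prim θ a n (p1+ε) - ∫ t in Set.Icc (0:ℝ) (p1-ε), Hker n t θ)
      (nhdsWithin 0 (Set.Ioi 0)) (nhds (C * (VV (Real.cos θ) n (-a) + VV (Real.cos θ) n a))) := by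
    rcases eq_or_lt_of_le hp1_nonneg with hp10 | hp10
    · -- p1 = 0, θ = a
      have hp1z : p1 = 0 := hp10.symm
      have hA0 : Tendsto (fun ε : ℝ => AA θ (ε-a) + AA θ (ε+a)) (nhdsWithin 0 (Set.Ioi 0)) (nhds 0) := by
        refine (AA_diff_tendsto θ a).congr fun ε => ?_
        rw [show ε-a = -(a-ε) by ring, AA_odd, show ε+a = a+ε by ring]
        ring
      have hV : Tendsto (fun ε : ℝ => VV (Real.cos θ) n (ε-a) + VV (Real.cos θ) n (ε+a))
          (nhdsWithin 0 (Set.Ioi 0)) (nhds (VV (Real.cos θ) n (-a) + VV (Real.cos θ) n a)) := by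
        have hc : Continuous (fun ε : ℝ => VV (Real.cos θ) n (ε-a) + VV (Real.cos θ) n (ε+a)) := by
          apply Continuous.add <;> exact (VV_continuous _ n).comp (by fun_prop)
        have h0 := (hc.tendsto 0).mono_left (nhdsWithin_le_nhds (s := Set.Ioi (0:ℝ)))
        simpa using h0
      have hlim := (hV.add (hA0.const_mul (Real.cos ((n:ℝ)*θ)))).const_mul C
      rw [mul_zero, add_zero] at hlim
      refine Tendsto.congr' ?_ hlim
      filter_upwards [self_mem_nhdsWithin] with ε hε
      have hε' : (0:ℝ) < ε := hε
      have hempty : Set.Icc (0:ℝ) (p1-ε) = ∅ :=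
        Set.Icc_eq_empty (not_le.mpr (by rw [hp1z]; linarith))
      rw [hempty, MeasureTheory.setIntegral_empty, sub_zero, hp1z, zero_add]
      unfold prim
      rfl
    · -- 0 < p1
      have hI1 : ∀ᶠ ε in nhdsWithin (0:ℝ) (Set.Ioi 0), (∫ t in Set.Icc (0:ℝ) (p1-ε), Hker n t θ)
          = C * prim θ a n (p1-ε) - C * prim θ a n 0 := by
        filter_upwards [Ioo_mem_nhdsGT_of_mem (Set.left_mem_Ico.mpr hp10)] with ε hε
        exact hFTC 0 (p1-ε) (by obtain ⟨h1, h2⟩ := hε; linarith) (hg1 ε hε.1)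
      have hprim0 : prim θ a n 0 = VV (Real.cos θ) n (-a) + VV (Real.cos θ) n a := by
        unfold prim
        rw [zero_sub, zero_add, show AA θ (-a) = -(AA θ a) from AA_odd θ a]
        ring
      have hdiff := (prim_diff_tendsto θ a n p1).const_mul C
      rw [mul_zero] at hdiff
      have hfinal := hdiff.add (tendsto_const_nhds (x := C * prim θ a n 0))
      rw [zero_add, hprim0] at hfinal
      refine Tendsto.congr' ?_ hfinal
      filter_upwards [hI1] with ε hI
      rw [hI, ← hprim0]
      ring
  -- limit at p2
  have hD2 : Tendsto (fun ε : ℝ => C * prim θ a n (p2-ε) + ∫ t in Set.Icc (p2+ε) π, Hker n t θ)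
      (nhdsWithin 0 (Set.Ioi 0)) (nhds (C * (VV (Real.cos θ) n (π-a) + VV (Real.cos θ) n (π+a)))) := by
    rcases eq_or_lt_of_le hp2_le_pi with hp2π | hp2π
    · -- p2 = π
      have hAπ : Tendsto (fun ε : ℝ => AA θ (π-ε-a) + AA θ (π-ε+a)) (nhdsWithin 0 (Set.Ioi 0)) (nhds 0) := by
        have h := (AA_diff_tendsto θ (π - a)).neg
        rw [neg_zero] at h
        refine h.congr fun ε => ?_
        have e1 : AA θ (π-ε-a) = AA θ ((π-a) - ε) := by ring_nf
        have e2 : AA θ (π-ε+a) = - AA θ ((π-a) + ε) := by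
          calc AA θ (π-ε+a) = AA θ ((a-ε-π) + 2*π) := by ring_nf
          _ = AA θ (a-ε-π) := AA_periodic θ _
          _ = AA θ (-((π-a)+ε)) := by ring_nf
          _ = - AA θ ((π-a)+ε) := AA_odd θ _
        rw [e1, e2]
        ring
      have hV : Tendsto (fun ε : ℝ => VV (Real.cos θ) n (π-ε-a) + VV (Real.cos θ) n (π-ε+a))
          (nhdsWithin 0 (Set.Ioi 0)) (nhds (VV (Real.cos θ) n (π-a) + VV (Real.cos θ) n (π+a))) := by
        have hc : Continuous (fun ε : ℝ => VV (Real.cos θ) n (π-ε-a) + VV (Real.cos θ) n (π-ε+a)) := by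
          apply Continuous.add <;> exact (VV_continuous _ n).comp (by fun_prop)
        have h0 := (hc.tendsto 0).mono_left (nhdsWithin_le_nhds (s := Set.Ioi (0:ℝ)))
        simpa using h0
      have hlim := (hV.add (hAπ.const_mul (Real.cos ((n:ℝ)*θ)))).const_mul C
      rw [mul_zero, add_zero] at hlim
      refine Tendsto.congr' ?_ hlim
      filter_upwards [self_mem_nhdsWithin] with ε hε
      have hε' : (0:ℝ) < ε := hε
      have hempty : Set.Icc (p2+ε) π = ∅ :=
        Set.Icc_eq_empty (not_le.mpr (by rw [hp2π]; linarith))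
      rw [hempty, MeasureTheory.setIntegral_empty, add_zero, hp2π]
      unfold prim
      rfl
    · -- p2 < π
      have hI3 : ∀ᶠ ε in nhdsWithin (0:ℝ) (Set.Ioi 0), (∫ t in Set.Icc (p2+ε) π, Hker n t θ)
          = C * prim θ a n π - C * prim θ a n (p2+ε) := by
        filter_upwards [Ioo_mem_nhdsGT_of_mem (Set.left_mem_Ico.mpr (by linarith : (0:ℝ) < π - p2))] with ε hε
        exact hFTC (p2+ε) π (by obtain ⟨h1, h2⟩ := hε; linarith) (hg3 ε hε.1)
      have hprimπ : prim θ a n π = VV (Real.cos θ) n (π-a) + VV (Real.cos θ) n (π+a) := by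
        unfold prim
        rw [show AA θ (π - a) = -(AA θ (π + a)) from AA_pi θ a]
        ring
      have hdiff := ((prim_diff_tendsto θ a n p2).const_mul C).neg
      rw [mul_zero, neg_zero] at hdiff
      have hfinal := hdiff.add (tendsto_const_nhds (x := C * prim θ a n π))
      rw [zero_add, hprimπ] at hfinal
      refine Tendsto.congr' ?_ hfinal
      filter_upwards [hI3] with ε hI
      rw [hI, ← hprimπ]
      ring
  -- main splitting
  have hsplit : ∀ᶠ ε in nhdsWithin (0:ℝ) (Set.Ioi 0),
      (∫ t in {t ∈ Set.Icc (0:ℝ) π | ∀ s : ℝ,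
          (Real.cos (s - a) = Real.cos θ ∨ Real.cos (s + a) = Real.cos θ) → ε ≤ |t - s|},
          Hker n t θ)
      = (C * prim θ a n (p2-ε) + ∫ t in Set.Icc (p2+ε) π, Hker n t θ)
        - (C * prim θ a n (p1+ε) - ∫ t in Set.Icc (0:ℝ) (p1-ε), Hker n t θ) := by
    filter_upwards [Ioo_mem_nhdsGT_of_mem (Set.left_mem_Ico.mpr hε0)] with ε hε
    obtain ⟨hε1, hε2⟩ := hε
    have hεa : ε ≤ a := le_trans hε2.le (min_le_left _ _)
    have hεgap : 2*ε ≤ p2 - p1 := by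
      have := min_le_right a ((p2 - p1)/2)
      have : ε ≤ (p2-p1)/2 := le_trans hε2.le this
      linarith
    rw [Sset_eq θ a ε p1 p2 hθ1 hθ2 ha ha2 hp1_def hp2_def hε1 hεa hεgap]
    have int1 : IntegrableOn (fun t => Hker n t θ) (Set.Icc (0:ℝ) (p1-ε)) volume :=
      (hcont _ _ (hg1 ε hε1)).integrableOn_Icc
    have int2 : IntegrableOn (fun t => Hker n t θ) (Set.Icc (p1+ε) (p2-ε)) volume :=
      (hcont _ _ (hg2 ε hε1)).integrableOn_Icc
    have int3 : IntegrableOn (fun t => Hker n t θ) (Set.Icc (p2+ε) π) volume :=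
      (hcont _ _ (hg3 ε hε1)).integrableOn_Icc
    have hd1 : Disjoint (Set.Icc (0:ℝ) (p1-ε)) (Set.Icc (p1+ε) (p2-ε)) := by
      apply Set.disjoint_left.mpr
      rintro x ⟨hx1, hx2⟩ ⟨hy1, hy2⟩
      linarith
    have hd2 : Disjoint (Set.Icc (0:ℝ) (p1-ε) ∪ Set.Icc (p1+ε) (p2-ε)) (Set.Icc (p2+ε) π) := by
      apply Set.disjoint_left.mpr
      rintro x (⟨hx1, hx2⟩ | ⟨hx1, hx2⟩) ⟨hy1, hy2⟩ <;> linarith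
    rw [MeasureTheory.setIntegral_union hd2 measurableSet_Icc (int1.union int2) int3,
      MeasureTheory.setIntegral_union hd1 measurableSet_Icc int1 int2,
      hFTC (p1+ε) (p2-ε) (by linarith) (hg2 ε hε1)]
    ring
  have hcombined := hD2.sub hD1
  have hval : C * (VV (Real.cos θ) n (π-a) + VV (Real.cos θ) n (π+a))
      - C * (VV (Real.cos θ) n (-a) + VV (Real.cos θ) n a)
      = π/(n:ℝ) * (Real.sin ((n:ℝ)*θ))^2 := by
    have h := VV_sum (Real.cos θ) n a
    have h2 := WW_integral θ hs n
    rw [h2] at h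
    have hn0 : (n:ℝ) ≠ 0 := by positivity
    calc C * (VV (Real.cos θ) n (π-a) + VV (Real.cos θ) n (π+a))
          - C * (VV (Real.cos θ) n (-a) + VV (Real.cos θ) n a)
        = C * (VV (Real.cos θ) n (π-a) + VV (Real.cos θ) n (π+a)
            - VV (Real.cos θ) n (-a) - VV (Real.cos θ) n a) := by ring
      _ = C * (2 * (π * Real.sin ((n:ℝ)*θ) / Real.sin θ)) := by rw [h]
      _ = π/(n:ℝ) * (Real.sin ((n:ℝ)*θ))^2 := by rw [hC_def]; field_simp
  rw [hval] at hcombined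
  apply Filter.Tendsto.congr' _ hcombined
  filter_upwards [hsplit] with ε h
  exact h.symm
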